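/- arXiv:1801.01041 — 2 statements merged into one kernel-verified Lean document; each statement's English description precedes it below -/
import Mathlib

section
/- Let (M,I,J,K,g_M) be a hyperkähler manifold, (N,g_N) a Riemannian manifold, and F : (M,I,J,K,g_M) → (N,g_N) an almost h-conformal slant submersion with (I,J,K) an almost h-conformal slant basis. Then for every R ∈ {I,J,K}: (1) V̂∇_V φ_R W + T_V ω_R W = φ_R V̂∇_V W + B_R T_V W and T_V φ_R W + H∇_V ω_R W = C_R T_V W + ω_R V̂∇_V W for all vertical V,W; (2) A_X C_R Y + V∇_X B_R Y = φ_R A_X Y + B_R H∇_X Y and H∇_X C_R Y + A_X B_R Y = ω_R A_X Y + C_R H∇_X Y for all horizontal X,Y; (3) A_X ω_R V + V∇_X φ_R V = B_R A_X V + φ_R V∇_X V and H∇_X ω_R V + A_X φ_R V = C_R A_X V + ω_R V∇_X V for vertical V and horizontal X. -/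
open scoped BigOperators

/-- Abstract framework for a horizontally conformal submersion `F : (M, g_M) → (N, g_N)`
between Riemannian manifolds.  `M` is the set of points of the total manifold,
`VFM` plays the role of the space of smooth vector fields on `M`
(a module over the ring of functions `M → ℝ`), and `VFN` plays the role of the
space of sections of the pullback bundle `F*(TN)` (vector fields along `F`).
`gM`, `gN` are the (pulled back) Riemannian metrics, `nabla` is the Levi-Civita
connection of `gM`, `Vp`/`Hp` are the vertical/horizontal projections onto
`ker F_*` and `(ker F_*)^⊥`, `Fstar` is the differential `F_*`, `nablaF` is
the pullback connection `∇^F`, `lam` is the dilation `λ`, and `dimN = dim N`. -/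
structure HorizConfSubmersion (M : Type) (VFM : Type) (VFN : Type)
    [AddCommGroup VFM] [Module (M → ℝ) VFM]
    [AddCommGroup VFN] [Module (M → ℝ) VFN] : Type where
  gM : VFM → VFM → M → ℝ
  gN : VFN → VFN → M → ℝ
  nabla : VFM → VFM → VFM
  bracket : VFM → VFM → VFM
  act : VFM → (M → ℝ) → M → ℝ
  grad : (M → ℝ) → VFM
  Vp : VFM → VFM
  Hp : VFM → VFM
  Fstar : VFM → VFN
  nablaF : VFM → VFN → VFN
  lam : M → ℝ
  dimN : ℕ
  lam_pos : ∀ p, 0 < lam p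
  gM_symm : ∀ X Y, gM X Y = gM Y X
  gM_add_left : ∀ X Y Z, gM (X + Y) Z = gM X Z + gM Y Z
  gM_smul_left : ∀ (f : M → ℝ) (X Y : VFM), gM (f • X) Y = f * gM X Y
  gN_symm : ∀ s t, gN s t = gN t s
  gN_add_left : ∀ s t u, gN (s + t) u = gN s u + gN t u
  gN_smul_left : ∀ (f : M → ℝ) (s t : VFN), gN (f • s) t = f * gN s t
  Vp_add : ∀ E E', Vp (E + E') = Vp E + Vp E'
  Hp_add : ∀ E E', Hp (E + E') = Hp E + Hp E'
  Vp_smul : ∀ (f : M → ℝ) (E : VFM), Vp (f • E) = f • Vp E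
  Hp_smul : ∀ (f : M → ℝ) (E : VFM), Hp (f • E) = f • Hp E
  Vp_add_Hp : ∀ E, Vp E + Hp E = E
  Vp_Vp : ∀ E, Vp (Vp E) = Vp E
  Hp_Hp : ∀ E, Hp (Hp E) = Hp E
  Vp_Hp : ∀ E, Vp (Hp E) = 0
  Hp_Vp : ∀ E, Hp (Vp E) = 0
  gM_VH : ∀ E E', gM (Vp E) (Hp E') = 0
  nabla_add_left : ∀ X Y Z, nabla (X + Y) Z = nabla X Z + nabla Y Z
  nabla_add_right : ∀ X Y Z, nabla X (Y + Z) = nabla X Y + nabla X Z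
  nabla_smul_left : ∀ (f : M → ℝ) (X Y : VFM), nabla (f • X) Y = f • nabla X Y
  nabla_leibniz : ∀ (f : M → ℝ) (X Y : VFM),
    nabla X (f • Y) = act X f • Y + f • nabla X Y
  nabla_torsion_free : ∀ X Y, nabla X Y - nabla Y X = bracket X Y
  nabla_metric : ∀ X Y Z, act X (gM Y Z) = gM (nabla X Y) Z + gM Y (nabla X Z)
  grad_spec : ∀ (f : M → ℝ) (X : VFM), gM (grad f) X = act X f
  Fstar_add : ∀ E E', Fstar (E + E') = Fstar E + Fstar E'
  Fstar_smul : ∀ (f : M → ℝ) (E : VFM), Fstar (f • E) = f • Fstar E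
  Fstar_vert : ∀ E, Fstar (Vp E) = 0
  /-- `F` is a submersion: every vector field along `F` comes from a horizontal field. -/
  Fstar_surj : ∀ s, ∃ X, Vp X = 0 ∧ Fstar X = s
  /-- horizontal conformality: `g_N(F_* X, F_* Y) = λ² g_M(X, Y)` on horizontal fields. -/
  conformal : ∀ X Y, Vp X = 0 → Vp Y = 0 →
    gN (Fstar X) (Fstar Y) = fun p => lam p ^ 2 * gM X Y p
  nablaF_add : ∀ X s t, nablaF X (s + t) = nablaF X s + nablaF X t
  nablaF_add_left : ∀ X Y s, nablaF (X + Y) s = nablaF X s + nablaF Y s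
  nablaF_smul_left : ∀ (f : M → ℝ) (X : VFM) (s : VFN),
    nablaF (f • X) s = f • nablaF X s
  nablaF_leibniz : ∀ (f : M → ℝ) (X : VFM) (s : VFN),
    nablaF X (f • s) = act X f • s + f • nablaF X s
  nablaF_metric : ∀ X s t, act X (gN s t) = gN (nablaF X s) t + gN s (nablaF X t)
  /-- symmetry of the second fundamental form `(∇F_*)(X,Y)`. -/
  sff_symm : ∀ X Y, nablaF X (Fstar Y) - Fstar (nabla X Y)
    = nablaF Y (Fstar X) - Fstar (nabla Y X)
  /-- the fundamental formula for `(∇F_*)` of a horizontally conformal submersion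
  on horizontal vector fields. -/
  sff_horizontal : ∀ X Y, Vp X = 0 → Vp Y = 0 →
    nablaF X (Fstar Y) - Fstar (nabla X Y)
      = act X (fun p => Real.log (lam p)) • Fstar Y
        + act Y (fun p => Real.log (lam p)) • Fstar X
        - gM X Y • Fstar (grad fun p => Real.log (lam p))
  /-- `N` is `dimN`-dimensional: there is a global orthonormal frame of sections
  along `F` (an abstract simplification). -/
  frameN : ∃ e : Fin dimN → VFN,
    (∀ i j, gN (e i) (e j) = fun _ => if i = j then (1 : ℝ) else 0) ∧
    ∀ s, s = ∑ i, gN s (e i) • e i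

namespace HorizConfSubmersion

variable {M VFM VFN : Type} [AddCommGroup VFM] [Module (M → ℝ) VFM]
    [AddCommGroup VFN] [Module (M → ℝ) VFN]
variable (D : HorizConfSubmersion M VFM VFN)

/-- the O'Neill tensor `T`. -/
def T (E F : VFM) : VFM :=
  D.Hp (D.nabla (D.Vp E) (D.Vp F)) + D.Vp (D.nabla (D.Vp E) (D.Hp F))

/-- the O'Neill tensor `A`. -/
def A (E F : VFM) : VFM :=
  D.Hp (D.nabla (D.Hp E) (D.Vp F)) + D.Vp (D.nabla (D.Hp E) (D.Hp F))

/-- `V̂∇_V W = V∇_V W`. -/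
def hatNabla (V W : VFM) : VFM := D.Vp (D.nabla V W)

/-- vertical part of `R E`; this is `φ_R` on vertical fields and `B_R` on
horizontal fields. -/
def phi (R : VFM → VFM) (E : VFM) : VFM := D.Vp (R E)

/-- horizontal part of `R E`; this is `ω_R` on vertical fields and `C_R` on
horizontal fields. -/
def om (R : VFM → VFM) (E : VFM) : VFM := D.Hp (R E)

/-- `ln λ`. -/
noncomputable def lnlam : M → ℝ := fun p => Real.log (D.lam p)

/-- the second fundamental form `(∇F_*)(X,Y) = ∇^F_X F_* Y − F_*(∇_X Y)`. -/
def sff (X Y : VFM) : VFN := D.nablaF X (D.Fstar Y) - D.Fstar (D.nabla X Y)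

/-- `F` is horizontally homothetic: `X(λ) = 0` for every horizontal `X`. -/
def HorizHomothetic : Prop := ∀ X, D.Vp X = 0 → D.act X D.lam = 0

/-- the horizontal distribution `(ker F_*)^⊥` is integrable. -/
def HIntegrable : Prop :=
  ∀ X Y, D.Vp X = 0 → D.Vp Y = 0 → D.Vp (D.bracket X Y) = 0

/-- the horizontal distribution `(ker F_*)^⊥` defines a totally geodesic foliation. -/
def HTotallyGeodesic : Prop :=
  ∀ X Y, D.Vp X = 0 → D.Vp Y = 0 → D.Vp (D.nabla X Y) = 0

/-- the vertical distribution `ker F_*` defines a totally geodesic foliation. -/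
def VTotallyGeodesic : Prop :=
  ∀ V W, D.Hp V = 0 → D.Hp W = 0 → D.Hp (D.nabla V W) = 0

/-- `e` is a (local) orthonormal frame of the vertical distribution `ker F_*`. -/
def IsVertFrame {m : ℕ} (e : Fin m → VFM) : Prop :=
  (∀ i, D.Hp (e i) = 0) ∧
  (∀ i j, D.gM (e i) (e j) = fun _ => if i = j then (1 : ℝ) else 0) ∧
  (∀ V, D.Hp V = 0 → V = ∑ i, D.gM V (e i) • e i)

/-- `e` is a (local) orthonormal frame of `TM`. -/
def IsFrame {m : ℕ} (e : Fin m → VFM) : Prop :=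
  (∀ i j, D.gM (e i) (e j) = fun _ => if i = j then (1 : ℝ) else 0) ∧
  (∀ E, E = ∑ i, D.gM E (e i) • e i)

/-- `F` is a harmonic map: the tension field `τ(F) = trace (∇F_*)` vanishes. -/
def Harmonic : Prop :=
  ∀ (m : ℕ) (e : Fin m → VFM), D.IsFrame e → ∑ i, D.sff (e i) (e i) = 0

/-- `F` is a totally geodesic map: `(∇F_*) ≡ 0`. -/
def TotallyGeodesicMap : Prop := ∀ X Y, D.sff X Y = 0

/-- `X ∈ Γ(μ^R)`, the orthogonal complement of `ω_R(ker F_*)` inside `(ker F_*)^⊥`. -/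
def InMu (R : VFM → VFM) (X : VFM) : Prop :=
  D.Vp X = 0 ∧ ∀ V, D.Hp V = 0 → D.gM X (D.om R V) = 0

/-- `R` is an almost Hermitian structure on `(M, g_M)`:
`R` is `C^∞(M)`-linear, `R² = −id` and `R` is an isometry of `g_M`. -/
def IsHermitian (R : VFM → VFM) : Prop :=
  (∀ X Y, R (X + Y) = R X + R Y) ∧
  (∀ (f : M → ℝ) (X : VFM), R (f • X) = f • R X) ∧
  (∀ X, R (R X) = -X) ∧
  (∀ X Y, D.gM (R X) (R Y) = D.gM X Y)

/-- `R` is parallel with respect to the Levi-Civita connection: `∇R = 0`. -/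
def IsParallel (R : VFM → VFM) : Prop :=
  ∀ X Y, D.nabla X (R Y) = R (D.nabla X Y)

/-- the angle between `R X` and the vertical space is the constant `θ` for every
nonzero vertical `X` at every point: `‖vertical part of R X‖ = cos θ · ‖X‖`
pointwise (recall `‖R X‖ = ‖X‖`). -/
def IsSlantOp (R : VFM → VFM) (θ : ℝ) : Prop :=
  0 ≤ θ ∧ θ ≤ Real.pi / 2 ∧
  ∀ V, D.Hp V = 0 → ∀ p,
    Real.sqrt (D.gM (D.phi R V) (D.phi R V) p) = Real.cos θ * Real.sqrt (D.gM V V p)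

/-- `ω_R` is parallel: `(∇_V ω_R)(W) = H∇_V ω_R W − ω_R V̂∇_V W = 0` for all
vertical `V`, `W`. -/
def OmParallel (R : VFM → VFM) : Prop :=
  ∀ V W, D.Hp V = 0 → D.Hp W = 0 →
    D.Hp (D.nabla V (D.om R W)) = D.om R (D.Vp (D.nabla V W))

end HorizConfSubmersion

/-- a quaternionic Hermitian basis `(I, J, K)` for `(M, g_M)` (as in an almost
quaternionic Hermitian manifold):  `I² = J² = K² = −id`, `IJ = −JI = K`, and
`I, J, K` are isometries of `g_M`. -/
structure QuatHermTriple {M VFM VFN : Type} [AddCommGroup VFM] [Module (M → ℝ) VFM]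
    [AddCommGroup VFN] [Module (M → ℝ) VFN]
    (D : HorizConfSubmersion M VFM VFN) : Type where
  I : VFM → VFM
  J : VFM → VFM
  K : VFM → VFM
  hermitian_I : D.IsHermitian I
  hermitian_J : D.IsHermitian J
  hermitian_K : D.IsHermitian K
  mul_IJ : ∀ X, I (J X) = K X
  mul_JI : ∀ X, J (I X) = -(K X)

/-- a hyperkähler structure `(I, J, K, g_M)` on `M`: a quaternionic Hermitian
basis which is parallel with respect to the Levi-Civita connection of `g_M`. -/
structure HyperkahlerTriple {M VFM VFN : Type} [AddCommGroup VFM] [Module (M → ℝ) VFM]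
    [AddCommGroup VFN] [Module (M → ℝ) VFN]
    (D : HorizConfSubmersion M VFM VFN) extends QuatHermTriple D : Type where
  parallel_I : D.IsParallel I
  parallel_J : D.IsParallel J
  parallel_K : D.IsParallel K

/-- the basic covariant derivative identities for an almost
h-conformal slant submersion from a hyperkähler manifold. -/
theorem covariant_identities
    {M VFM VFN : Type} [AddCommGroup VFM] [Module (M → ℝ) VFM]
    [AddCommGroup VFN] [Module (M → ℝ) VFN]
    (D : HorizConfSubmersion M VFM VFN) (Q : HyperkahlerTriple D)
    (θI θJ θK : ℝ)
    (hslantI : D.IsSlantOp Q.I θI) (hslantJ : D.IsSlantOp Q.J θJ)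
    (hslantK : D.IsSlantOp Q.K θK)
    (R : VFM → VFM) (hR : R = Q.I ∨ R = Q.J ∨ R = Q.K) :
    -- (1) for vertical V, W
    (∀ V W, D.Hp V = 0 → D.Hp W = 0 →
      (D.hatNabla V (D.phi R W) + D.T V (D.om R W)
        = D.phi R (D.hatNabla V W) + D.phi R (D.T V W)) ∧
      (D.T V (D.phi R W) + D.Hp (D.nabla V (D.om R W))
        = D.om R (D.T V W) + D.om R (D.hatNabla V W))) ∧
    -- (2) for horizontal X, Y
    (∀ X Y, D.Vp X = 0 → D.Vp Y = 0 →
      (D.A X (D.om R Y) + D.Vp (D.nabla X (D.phi R Y))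
        = D.phi R (D.A X Y) + D.phi R (D.Hp (D.nabla X Y))) ∧
      (D.Hp (D.nabla X (D.om R Y)) + D.A X (D.phi R Y)
        = D.om R (D.A X Y) + D.om R (D.Hp (D.nabla X Y)))) ∧
    -- (3) for vertical V and horizontal X
    (∀ V X, D.Hp V = 0 → D.Vp X = 0 →
      (D.A X (D.om R V) + D.Vp (D.nabla X (D.phi R V))
        = D.phi R (D.A X V) + D.phi R (D.Vp (D.nabla X V))) ∧
      (D.Hp (D.nabla X (D.om R V)) + D.A X (D.phi R V)
        = D.om R (D.A X V) + D.om R (D.Vp (D.nabla X V)))) := by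

  have hadd : ∀ X Y, R (X + Y) = R X + R Y := by
    rcases hR with h | h | h <;> subst h
    exacts [Q.hermitian_I.1, Q.hermitian_J.1, Q.hermitian_K.1]
  have hpar : ∀ X Y, D.nabla X (R Y) = R (D.nabla X Y) := by
    rcases hR with h | h | h <;> subst h
    exacts [Q.parallel_I, Q.parallel_J, Q.parallel_K]
  have Vp0 : D.Vp 0 = 0 := by
    have h := D.Vp_add 0 0; rw [add_zero] at h
    exact right_eq_add.mp h
  have Hp0 : D.Hp 0 = 0 := by
    have h := D.Hp_add 0 0; rw [add_zero] at h
    exact right_eq_add.mp h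
  have nab0 : ∀ X, D.nabla X 0 = 0 := by
    intro X
    have h := D.nabla_add_right X 0 0; rw [add_zero] at h
    exact right_eq_add.mp h
  have masterV : ∀ E F, D.Vp (D.nabla E (D.phi R F)) + D.Vp (D.nabla E (D.om R F))
      = D.phi R (D.Vp (D.nabla E F)) + D.phi R (D.Hp (D.nabla E F)) := by
    intro E F
    have h1 : D.nabla E (R F) = D.nabla E (D.phi R F) + D.nabla E (D.om R F) := by
      rw [← D.nabla_add_right]
      exact congrArg _ (D.Vp_add_Hp (R F)).symm
    have h2 : D.nabla E (R F) = R (D.Vp (D.nabla E F)) + R (D.Hp (D.nabla E F)) := by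
      rw [hpar, ← hadd, D.Vp_add_Hp]
    have h3 := congrArg D.Vp (h1.symm.trans h2)
    rw [D.Vp_add, D.Vp_add] at h3
    exact h3
  have masterH : ∀ E F, D.Hp (D.nabla E (D.phi R F)) + D.Hp (D.nabla E (D.om R F))
      = D.om R (D.Vp (D.nabla E F)) + D.om R (D.Hp (D.nabla E F)) := by
    intro E F
    have h1 : D.nabla E (R F) = D.nabla E (D.phi R F) + D.nabla E (D.om R F) := by
      rw [← D.nabla_add_right]
      exact congrArg _ (D.Vp_add_Hp (R F)).symm
    have h2 : D.nabla E (R F) = R (D.Vp (D.nabla E F)) + R (D.Hp (D.nabla E F)) := by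
      rw [hpar, ← hadd, D.Vp_add_Hp]
    have h3 := congrArg D.Hp (h1.symm.trans h2)
    rw [D.Hp_add, D.Hp_add] at h3
    exact h3
  have vfix : ∀ V, D.Hp V = 0 → D.Vp V = V := by
    intro V hV
    have := D.Vp_add_Hp V; rw [hV, add_zero] at this; exact this
  have hfix : ∀ X, D.Vp X = 0 → D.Hp X = X := by
    intro X hX
    have := D.Vp_add_Hp X; rw [hX, zero_add] at this; exact this
  refine ⟨?_, ?_, ?_⟩
  · intro V W hV hW
    have hVv := vfix V hV
    have hWv := vfix W hW
    have eT : ∀ Z, D.T V Z = D.Hp (D.nabla V (D.Vp Z)) + D.Vp (D.nabla V (D.Hp Z)) := by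
      intro Z; simp [HorizConfSubmersion.T, hVv]
    have eTom : D.T V (D.om R W) = D.Vp (D.nabla V (D.om R W)) := by
      rw [eT]
      simp [HorizConfSubmersion.om, D.Vp_Hp, D.Hp_Hp, nab0, Hp0]
    have eTphi : D.T V (D.phi R W) = D.Hp (D.nabla V (D.phi R W)) := by
      rw [eT]
      simp [HorizConfSubmersion.phi, D.Hp_Vp, D.Vp_Vp, nab0, Vp0]
    have eTVW : D.T V W = D.Hp (D.nabla V W) := by
      rw [eT, hWv, hW]
      simp [nab0, Vp0]
    constructor
    · rw [eTom, eTVW]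
      show D.Vp (D.nabla V (D.phi R W)) + D.Vp (D.nabla V (D.om R W)) = _
      rw [masterV]
      rfl
    · rw [eTphi, eTVW]
      exact (masterH V W).trans (add_comm _ _)
  · intro X Y hX hY
    have hXh := hfix X hX
    have eA : ∀ Z, D.A X Z = D.Hp (D.nabla X (D.Vp Z)) + D.Vp (D.nabla X (D.Hp Z)) := by
      intro Z; simp [HorizConfSubmersion.A, hXh]
    have eAom : D.A X (D.om R Y) = D.Vp (D.nabla X (D.om R Y)) := by
      rw [eA]
      simp [HorizConfSubmersion.om, D.Vp_Hp, D.Hp_Hp, nab0, Hp0]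
    have eAphi : D.A X (D.phi R Y) = D.Hp (D.nabla X (D.phi R Y)) := by
      rw [eA]
      simp [HorizConfSubmersion.phi, D.Hp_Vp, D.Vp_Vp, nab0, Vp0]
    have eAXY : D.A X Y = D.Vp (D.nabla X Y) := by
      rw [eA, hfix Y hY, hY]
      simp [nab0, Hp0]
    constructor
    · rw [eAom, eAXY]
      have := masterV X Y
      show D.Vp (D.nabla X (D.om R Y)) + D.Vp (D.nabla X (D.phi R Y)) = _
      rw [← this]; abel
    · rw [eAphi, eAXY]
      exact (add_comm _ _).trans (masterH X Y)
  · intro V X hV hX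
    have hXh := hfix X hX
    have hVv := vfix V hV
    have eA : ∀ Z, D.A X Z = D.Hp (D.nabla X (D.Vp Z)) + D.Vp (D.nabla X (D.Hp Z)) := by
      intro Z; simp [HorizConfSubmersion.A, hXh]
    have eAom : D.A X (D.om R V) = D.Vp (D.nabla X (D.om R V)) := by
      rw [eA]
      simp [HorizConfSubmersion.om, D.Vp_Hp, D.Hp_Hp, nab0, Hp0]
    have eAphi : D.A X (D.phi R V) = D.Hp (D.nabla X (D.phi R V)) := by
      rw [eA]
      simp [HorizConfSubmersion.phi, D.Hp_Vp, D.Vp_Vp, nab0, Vp0]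
    have eAXV : D.A X V = D.Hp (D.nabla X V) := by
      rw [eA, hVv, hV]
      simp [nab0, Vp0]
    constructor
    · rw [eAom, eAXV]
      have := masterV X V
      exact (add_comm _ _).trans (this.trans (add_comm _ _))
    · rw [eAphi, eAXV]
      have := masterH X V
      exact (add_comm _ _).trans (this.trans (add_comm _ _))
end

section
/- Let (M,I,J,K,g_M) be a hyperkähler manifold, (N,g_N) a Riemannian manifold with dim N = 2, and F : (M,I,J,K,g_M) → (N,g_N) an almost h-conformal slant submersion with (I,J,K) an almost h-conformal slant basis. Assume ω_R is parallel with slant angle 0 ≤ θ_R < π/2 for some R ∈ {I,J,K}. Then F is a harmonic map. -/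
open scoped BigOperators

section Aux

private lemma addmap_zero {A B : Type} [AddCommGroup A] [AddCommGroup B]
    (f : A → B) (h : ∀ x y, f (x + y) = f x + f y) : f 0 = 0 := by
  have h0 := h 0 0
  rw [add_zero] at h0
  exact (left_eq_add.mp h0)

private lemma addmap_neg {A B : Type} [AddCommGroup A] [AddCommGroup B]
    (f : A → B) (h : ∀ x y, f (x + y) = f x + f y) (x : A) : f (-x) = -(f x) := by
  have h0 : f (x + -x) = f x + f (-x) := h x (-x)
  rw [add_neg_cancel, addmap_zero f h] at h0
  exact neg_eq_of_add_eq_zero_right h0.symm |>.symm ▸ (eq_neg_of_add_eq_zero_right h0.symm)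

private lemma addmap_sub {A B : Type} [AddCommGroup A] [AddCommGroup B]
    (f : A → B) (h : ∀ x y, f (x + y) = f x + f y) (x y : A) : f (x - y) = f x - f y := by
  rw [sub_eq_add_neg, h, addmap_neg f h, sub_eq_add_neg]

private lemma addmap_sum {A B : Type} [AddCommGroup A] [AddCommGroup B]
    (f : A → B) (h : ∀ x y, f (x + y) = f x + f y) {ι : Type} (s : Finset ι) (F : ι → A) :
    f (∑ i ∈ s, F i) = ∑ i ∈ s, f (F i) := by
  classical
  induction s using Finset.induction_on with
  | empty => simpa using addmap_zero f h
  | insert _ _ hx ih => rw [Finset.sum_insert hx, Finset.sum_insert hx, h, ih]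

namespace HorizConfSubmersion

variable {M VFM VFN : Type} [AddCommGroup VFM] [Module (M → ℝ) VFM]
    [AddCommGroup VFN] [Module (M → ℝ) VFN]
variable (D : HorizConfSubmersion M VFM VFN)

lemma gM_add_right (X Y Z : VFM) : D.gM X (Y + Z) = D.gM X Y + D.gM X Z := by
  rw [D.gM_symm, D.gM_add_left, D.gM_symm Y X, D.gM_symm Z X]

lemma gM_smul_right (f : M → ℝ) (X Y : VFM) : D.gM X (f • Y) = f * D.gM X Y := by
  rw [D.gM_symm, D.gM_smul_left, D.gM_symm]

lemma gM_zero_left (Z : VFM) : D.gM 0 Z = 0 :=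
  addmap_zero (fun E => D.gM E Z) (fun x y => D.gM_add_left x y Z)

lemma gM_zero_right (Z : VFM) : D.gM Z 0 = 0 :=
  addmap_zero (fun E => D.gM Z E) (fun x y => D.gM_add_right Z x y)

lemma gM_neg_right (X Y : VFM) : D.gM X (-Y) = -(D.gM X Y) :=
  addmap_neg (fun E => D.gM X E) (fun x y => D.gM_add_right X x y) Y

lemma gM_neg_left (X Y : VFM) : D.gM (-X) Y = -(D.gM X Y) :=
  addmap_neg (fun E => D.gM E Y) (fun x y => D.gM_add_left x y Y) X

lemma gM_sub_right (X Y Z : VFM) : D.gM X (Y - Z) = D.gM X Y - D.gM X Z :=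
  addmap_sub (fun E => D.gM X E) (fun x y => D.gM_add_right X x y) Y Z

lemma gM_sum_right {ι : Type} (s : Finset ι) (Z : VFM) (F : ι → VFM) :
    D.gM Z (∑ i ∈ s, F i) = ∑ i ∈ s, D.gM Z (F i) :=
  addmap_sum (fun E => D.gM Z E) (fun x y => D.gM_add_right Z x y) s F

lemma gN_add_right (s t u : VFN) : D.gN s (t + u) = D.gN s t + D.gN s u := by
  rw [D.gN_symm, D.gN_add_left, D.gN_symm t s, D.gN_symm u s]

lemma gN_smul_right (f : M → ℝ) (s t : VFN) : D.gN s (f • t) = f * D.gN s t := by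
  rw [D.gN_symm, D.gN_smul_left, D.gN_symm]

lemma gN_zero_left (t : VFN) : D.gN 0 t = 0 :=
  addmap_zero (fun s => D.gN s t) (fun x y => D.gN_add_left x y t)

lemma gN_neg_left (s t : VFN) : D.gN (-s) t = -(D.gN s t) :=
  addmap_neg (fun s' => D.gN s' t) (fun x y => D.gN_add_left x y t) s

lemma gN_sub_left (s s' t : VFN) : D.gN (s - s') t = D.gN s t - D.gN s' t :=
  addmap_sub (fun u => D.gN u t) (fun x y => D.gN_add_left x y t) s s'

lemma gN_sum_left {ι : Type} (s : Finset ι) (t : VFN) (F : ι → VFN) :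
    D.gN (∑ i ∈ s, F i) t = ∑ i ∈ s, D.gN (F i) t :=
  addmap_sum (fun u => D.gN u t) (fun x y => D.gN_add_left x y t) s F

lemma gN_sum_right {ι : Type} (s : Finset ι) (t : VFN) (F : ι → VFN) :
    D.gN t (∑ i ∈ s, F i) = ∑ i ∈ s, D.gN t (F i) :=
  addmap_sum (fun u => D.gN t u) (fun x y => D.gN_add_right t x y) s F

lemma nabla_zero_right (X : VFM) : D.nabla X 0 = 0 :=
  addmap_zero (fun E => D.nabla X E) (fun x y => D.nabla_add_right X x y)

lemma nabla_zero_left (X : VFM) : D.nabla 0 X = 0 :=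
  addmap_zero (fun E => D.nabla E X) (fun x y => D.nabla_add_left x y X)

lemma nablaF_zero_right (X : VFM) : D.nablaF X 0 = 0 :=
  addmap_zero (fun s => D.nablaF X s) (fun x y => D.nablaF_add X x y)

lemma Fstar_sub (E E' : VFM) : D.Fstar (E - E') = D.Fstar E - D.Fstar E' :=
  addmap_sub D.Fstar D.Fstar_add E E'

lemma vert_eq {V : VFM} (hV : D.Hp V = 0) : D.Vp V = V := by
  have h := D.Vp_add_Hp V
  rw [hV, add_zero] at h
  exact h

lemma horiz_eq {X : VFM} (hX : D.Vp X = 0) : D.Hp X = X := by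
  have h := D.Vp_add_Hp X
  rw [hX, zero_add] at h
  exact h

lemma Fstar_vert' {V : VFM} (hV : D.Hp V = 0) : D.Fstar V = 0 := by
  rw [← D.vert_eq hV]
  exact D.Fstar_vert V

lemma gM_Vp_horiz {X : VFM} (hX : D.Vp X = 0) (Z : VFM) : D.gM (D.Vp Z) X = 0 := by
  rw [← D.horiz_eq hX]
  exact D.gM_VH Z X

lemma gM_horiz_Vp {X : VFM} (hX : D.Vp X = 0) (Z : VFM) : D.gM X (D.Vp Z) = 0 := by
  rw [D.gM_symm]
  exact D.gM_Vp_horiz hX Z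

lemma gM_Hp_vert {V : VFM} (hV : D.Hp V = 0) (Z : VFM) : D.gM (D.Hp Z) V = 0 := by
  rw [D.gM_symm, ← D.vert_eq hV]
  exact D.gM_VH V Z

lemma gM_vert_Hp {V : VFM} (hV : D.Hp V = 0) (Z : VFM) : D.gM V (D.Hp Z) = 0 := by
  rw [D.gM_symm]
  exact D.gM_Hp_vert hV Z

lemma gM_vert_horiz {V X : VFM} (hV : D.Hp V = 0) (hX : D.Vp X = 0) : D.gM V X = 0 := by
  rw [← D.vert_eq hV]
  exact D.gM_Vp_horiz hX V

lemma gM_Hp_drop {X : VFM} (hX : D.Vp X = 0) (E : VFM) : D.gM (D.Hp E) X = D.gM E X := by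
  conv_rhs => rw [← D.Vp_add_Hp E]
  rw [D.gM_add_left, D.gM_Vp_horiz hX, zero_add]

lemma gM_Vp_move (A B : VFM) : D.gM (D.Vp A) B = D.gM A (D.Vp B) := by
  have h1 : D.gM (D.Vp A) B = D.gM (D.Vp A) (D.Vp B) := by
    conv_lhs => rw [← D.Vp_add_Hp B]
    rw [D.gM_add_right, D.gM_VH, add_zero]
  have h2 : D.gM A (D.Vp B) = D.gM (D.Vp A) (D.Vp B) := by
    conv_lhs => rw [← D.Vp_add_Hp A]
    rw [D.gM_add_left]
    have : D.gM (D.Hp A) (D.Vp B) = 0 := by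
      rw [D.gM_symm]; exact D.gM_VH B A
    rw [this, add_zero]
  rw [h1, h2]

lemma gM_Hp_move (A B : VFM) : D.gM (D.Hp A) B = D.gM A (D.Hp B) := by
  have h1 : D.gM (D.Hp A) B = D.gM (D.Hp A) (D.Hp B) := by
    conv_lhs => rw [← D.Vp_add_Hp B]
    rw [D.gM_add_right]
    have : D.gM (D.Hp A) (D.Vp B) = 0 := by
      rw [D.gM_symm]; exact D.gM_VH B A
    rw [this, zero_add]
  have h2 : D.gM A (D.Hp B) = D.gM (D.Hp A) (D.Hp B) := by
    conv_lhs => rw [← D.Vp_add_Hp A]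
    rw [D.gM_add_left, D.gM_VH, zero_add]
  rw [h1, h2]

lemma act_zero (Z : VFM) : D.act Z (0 : M → ℝ) = 0 := by
  have h := D.nabla_metric Z 0 0
  rw [D.nabla_zero_right] at h
  rw [D.gM_zero_left] at h
  simpa using h

lemma pair_Fstar {X : VFM} (hX : D.Vp X = 0) (Z : VFM) :
    D.gN (D.Fstar Z) (D.Fstar X) = fun p => D.lam p ^ 2 * D.gM Z X p := by
  have h1 : D.Fstar Z = D.Fstar (D.Hp Z) := by
    conv_lhs => rw [← D.Vp_add_Hp Z]
    rw [D.Fstar_add, D.Fstar_vert, zero_add]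
  have h2 := D.conformal (D.Hp Z) X (D.Vp_Hp Z) hX
  rw [h1, h2, D.gM_Hp_drop hX]

lemma sff_comm (A B : VFM) : D.sff A B = D.sff B A := by
  simp only [sff]
  exact D.sff_symm A B

lemma sff_add_left (A B C : VFM) : D.sff (A + B) C = D.sff A C + D.sff B C := by
  simp only [sff, D.nablaF_add_left, D.nabla_add_left, D.Fstar_add]
  abel

lemma sff_add_right (A B C : VFM) : D.sff A (B + C) = D.sff A B + D.sff A C := by
  simp only [sff, D.nablaF_add, D.nabla_add_right, D.Fstar_add]
  abel

lemma sff_vert_right {W : VFM} (hW : D.Hp W = 0) (A : VFM) :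
    D.sff A W = -(D.Fstar (D.nabla A W)) := by
  simp only [sff, D.Fstar_vert' hW, D.nablaF_zero_right, zero_sub]

/-- the frame expansion of the metric. -/
lemma gM_expand {m : ℕ} {e : Fin m → VFM} (he : D.IsFrame e) (A B : VFM) :
    D.gM A B = ∑ i, D.gM B (e i) * D.gM A (e i) := by
  conv_lhs => rw [he.2 B]
  rw [D.gM_sum_right]
  exact Finset.sum_congr rfl fun i _ => D.gM_smul_right _ _ _

lemma gM_self_nonneg {m : ℕ} {e : Fin m → VFM} (he : D.IsFrame e) (A : VFM) (p : M) :
    0 ≤ D.gM A A p := by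
  rw [D.gM_expand he A A, Finset.sum_apply]
  refine Finset.sum_nonneg fun i _ => ?_
  rw [Pi.mul_apply]
  exact mul_self_nonneg _

/-- trace transfer across an adjoint. -/
lemma transfer {m : ℕ} {e : Fin m → VFM} (he : D.IsFrame e)
    (S : VFM → VFM → M → ℝ)
    (hSl_add : ∀ A A' B, S (A + A') B = S A B + S A' B)
    (hSl_smul : ∀ (f : M → ℝ) A B, S (f • A) B = f * S A B)
    (hSr_add : ∀ A B B', S A (B + B') = S A B + S A B')
    (hSr_smul : ∀ (f : M → ℝ) A B, S A (f • B) = f * S A B)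
    (Q Qadj : VFM → VFM)
    (hadj : ∀ A B, D.gM (Q A) B = D.gM A (Qadj B)) :
    ∑ i, S (e i) (Q (e i)) = ∑ j, S (Qadj (e j)) (e j) := by
  have step1 : ∀ i, S (e i) (Q (e i))
      = ∑ j, D.gM (Q (e i)) (e j) * S (e i) (e j) := by
    intro i
    conv_lhs => rw [he.2 (Q (e i))]
    rw [addmap_sum (fun B => S (e i) B) (fun x y => hSr_add (e i) x y)]
    exact Finset.sum_congr rfl fun j _ => hSr_smul _ _ _
  have step2 : ∀ j, S (Qadj (e j)) (e j)
      = ∑ i, D.gM (e i) (Qadj (e j)) * S (e i) (e j) := by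
    intro j
    conv_lhs => rw [he.2 (Qadj (e j))]
    rw [addmap_sum (fun A => S A (e j)) (fun x y => hSl_add x y (e j))]
    refine Finset.sum_congr rfl fun i _ => ?_
    rw [hSl_smul, D.gM_symm]
  calc ∑ i, S (e i) (Q (e i))
      = ∑ i, ∑ j, D.gM (Q (e i)) (e j) * S (e i) (e j) :=
        Finset.sum_congr rfl fun i _ => step1 i
    _ = ∑ j, ∑ i, D.gM (e i) (Qadj (e j)) * S (e i) (e j) := by
        rw [Finset.sum_comm]
        exact Finset.sum_congr rfl fun j _ =>
          Finset.sum_congr rfl fun i _ => by rw [hadj]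
    _ = ∑ j, S (Qadj (e j)) (e j) :=
        Finset.sum_congr rfl fun j _ => (step2 j).symm

section Rlemmas

variable {R : VFM → VFM} {θ : ℝ}

lemma skewR (hherm : D.IsHermitian R) (A B : VFM) :
    D.gM (R A) B = -(D.gM A (R B)) := by
  have h := hherm.2.2.2 A (R B)
  rw [hherm.2.2.1 B, D.gM_neg_right] at h
  exact neg_eq_iff_eq_neg.mp h

lemma bracket_pair {A B X : VFM} (hA : D.Hp A = 0) (hB : D.Hp B = 0) (hX : D.Vp X = 0) :
    D.gM (D.nabla A B) X = D.gM (D.nabla B A) X := by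
  have hbr : D.Fstar (D.bracket A B) = 0 := by
    rw [← D.nabla_torsion_free, D.Fstar_sub]
    have hs := D.sff_symm A B
    rw [D.Fstar_vert' hA, D.Fstar_vert' hB, D.nablaF_zero_right, D.nablaF_zero_right,
      zero_sub, zero_sub, neg_inj] at hs
    rw [hs, sub_self]
  have h2 : D.gM (D.bracket A B) X = 0 := by
    have h3 := D.pair_Fstar hX (D.bracket A B)
    rw [hbr, D.gN_zero_left] at h3
    funext p
    have h4 : D.lam p ^ 2 * D.gM (D.bracket A B) X p = 0 := by
      simpa using (congrFun h3 p).symm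
    have h5 : D.lam p ^ 2 ≠ 0 := pow_ne_zero _ (ne_of_gt (D.lam_pos p))
    simpa using (mul_eq_zero.mp h4).resolve_left h5
  have ht := D.nabla_torsion_free A B
  have : D.nabla A B = D.nabla B A + D.bracket A B := by
    rw [← ht]; abel
  rw [this, D.gM_add_left, h2, add_zero]

lemma hp_nabla_pair {A B X : VFM} (hA : D.Hp A = 0) (hB : D.Hp B = 0) (hX : D.Vp X = 0) :
    D.gM (D.Hp (D.nabla A B)) X = D.gM (D.Hp (D.nabla B A)) X := by
  rw [D.gM_Hp_drop hX, D.gM_Hp_drop hX]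
  exact D.bracket_pair hA hB hX

lemma slant_sq {m : ℕ} {e : Fin m → VFM} (he : D.IsFrame e) (hslant : D.IsSlantOp R θ)
    {V : VFM} (hV : D.Hp V = 0) (p : M) :
    D.gM (D.Vp (R V)) (D.Vp (R V)) p = Real.cos θ ^ 2 * D.gM V V p := by
  have h := hslant.2.2 V hV p
  have h1 : 0 ≤ D.gM (D.Vp (R V)) (D.Vp (R V)) p := D.gM_self_nonneg he _ p
  have h2 : 0 ≤ D.gM V V p := D.gM_self_nonneg he _ p
  have hphi : D.phi R V = D.Vp (R V) := rfl
  rw [hphi] at h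
  calc D.gM (D.Vp (R V)) (D.Vp (R V)) p
      = Real.sqrt (D.gM (D.Vp (R V)) (D.Vp (R V)) p) ^ 2 := (Real.sq_sqrt h1).symm
    _ = (Real.cos θ * Real.sqrt (D.gM V V p)) ^ 2 := by rw [h]
    _ = Real.cos θ ^ 2 * D.gM V V p := by rw [mul_pow, Real.sq_sqrt h2]

lemma slant_polar {m : ℕ} {e : Fin m → VFM} (he : D.IsFrame e)
    (hherm : D.IsHermitian R) (hslant : D.IsSlantOp R θ)
    {V W : VFM} (hV : D.Hp V = 0) (hW : D.Hp W = 0) (p : M) :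
    D.gM (D.Vp (R V)) (D.Vp (R W)) p = Real.cos θ ^ 2 * D.gM V W p := by
  have hVW : D.Hp (V + W) = 0 := by rw [D.Hp_add, hV, hW, add_zero]
  have h1 := D.slant_sq he hslant hVW p
  have h2 := D.slant_sq he hslant hV p
  have h3 := D.slant_sq he hslant hW p
  have e1 : D.Vp (R (V + W)) = D.Vp (R V) + D.Vp (R W) := by rw [hherm.1, D.Vp_add]
  rw [e1, D.gM_add_left, D.gM_add_right, D.gM_add_right] at h1
  rw [D.gM_add_left, D.gM_add_right, D.gM_add_right] at h1
  simp only [Pi.add_apply] at h1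
  have hsymm1 : D.gM (D.Vp (R W)) (D.Vp (R V)) p = D.gM (D.Vp (R V)) (D.Vp (R W)) p :=
    congrFun (D.gM_symm _ _) p
  have hsymm2 : D.gM W V p = D.gM V W p := congrFun (D.gM_symm _ _) p
  nlinarith [h1, h2, h3]

lemma phi_skew (hherm : D.IsHermitian R) {A B : VFM} (hA : D.Hp A = 0) (hB : D.Hp B = 0) :
    D.gM (D.Vp (R A)) B = -(D.gM A (D.Vp (R B))) := by
  have h1 : D.gM (D.Vp (R A)) B = D.gM (R A) B := by
    conv_rhs => rw [← D.Vp_add_Hp (R A)]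
    rw [D.gM_add_left, D.gM_Hp_vert hB, add_zero]
  have h2 : D.gM A (D.Vp (R B)) = D.gM A (R B) := by
    conv_rhs => rw [← D.Vp_add_Hp (R B)]
    rw [D.gM_add_right, D.gM_vert_Hp hA, add_zero]
  rw [h1, h2]
  exact D.skewR hherm A B

/-- `φ² = -cos²θ` on vertical fields. -/
lemma phi_sq {m : ℕ} {e : Fin m → VFM} (he : D.IsFrame e)
    (hherm : D.IsHermitian R) (hslant : D.IsSlantOp R θ)
    {V : VFM} (hV : D.Hp V = 0) :
    D.Vp (R (D.Vp (R V))) = ((fun _ => -(Real.cos θ ^ 2)) : M → ℝ) • V := by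
  have key : ∀ B : VFM,
      D.gM (D.Vp (R (D.Vp (R V))) + ((fun _ => Real.cos θ ^ 2) : M → ℝ) • V) B = 0 := by
    intro B
    rw [D.gM_add_left, D.gM_smul_left]
    funext p
    have hsplit : D.gM (D.Vp (R (D.Vp (R V)))) B
        = D.gM (D.Vp (R (D.Vp (R V)))) (D.Vp B) := by
      conv_lhs => rw [← D.Vp_add_Hp B]
      rw [D.gM_add_right, D.gM_VH, add_zero]
    have hsplit2 : D.gM V B = D.gM V (D.Vp B) := by
      conv_lhs => rw [← D.Vp_add_Hp B]
      rw [D.gM_add_right, D.gM_vert_Hp hV, add_zero]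
    have hskew : D.gM (D.Vp (R (D.Vp (R V)))) (D.Vp B)
        = -(D.gM (D.Vp (R V)) (D.Vp (R (D.Vp B)))) :=
      D.phi_skew hherm (D.Hp_Vp _) (D.Hp_Vp _)
    have hpol := D.slant_polar he hherm hslant hV (D.Hp_Vp B) p
    simp only [Pi.add_apply, Pi.mul_apply, Pi.zero_apply]
    rw [hsplit, hsplit2, hskew]
    simp only [Pi.neg_apply]
    rw [hpol]
    have : D.gM V (D.Vp B) p = D.gM V (D.Vp B) p := rfl
    ring
  have hzero : D.Vp (R (D.Vp (R V))) + ((fun _ => Real.cos θ ^ 2) : M → ℝ) • V = 0 := by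
    set U := D.Vp (R (D.Vp (R V))) + ((fun _ => Real.cos θ ^ 2) : M → ℝ) • V with hU
    rw [he.2 U]
    refine Finset.sum_eq_zero fun i _ => ?_
    rw [hU] at key ⊢
    rw [key (e i), zero_smul]
  have h9 := eq_neg_of_add_eq_zero_left hzero
  rw [h9, show (fun _ => -(Real.cos θ ^ 2) : M → ℝ) = -(fun _ => Real.cos θ ^ 2 : M → ℝ)
    from rfl, neg_smul]

/-- consequence of `∇R = 0` and `ω_R` parallel: `H∇_V (φW) = C(H∇_V W)`. -/
lemma star_id (hherm : D.IsHermitian R) (hparallel : D.IsParallel R)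
    (hpar : D.OmParallel R) {V W : VFM} (hV : D.Hp V = 0) (hW : D.Hp W = 0) :
    D.Hp (D.nabla V (D.Vp (R W))) = D.Hp (R (D.Hp (D.nabla V W))) := by
  have h2 : D.nabla V (D.Vp (R W)) + D.nabla V (D.Hp (R W)) = R (D.nabla V W) := by
    rw [← D.nabla_add_right, D.Vp_add_Hp]
    exact hparallel V W
  have h3 : D.Hp (D.nabla V (D.Vp (R W))) + D.Hp (D.nabla V (D.Hp (R W)))
      = D.Hp (R (D.nabla V W)) := by
    rw [← D.Hp_add, h2]
  have h4 : D.Hp (D.nabla V (D.Hp (R W))) = D.Hp (R (D.Vp (D.nabla V W))) := by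
    have h := hpar V W hV hW
    simpa only [om] using h
  have h5 : D.Hp (R (D.nabla V W))
      = D.Hp (R (D.Vp (D.nabla V W))) + D.Hp (R (D.Hp (D.nabla V W))) := by
    conv_lhs => rw [← D.Vp_add_Hp (D.nabla V W)]
    rw [hherm.1, D.Hp_add]
  rw [h4, h5] at h3
  have h6 := h3
  rw [add_comm (D.Hp (R (D.Vp (D.nabla V W))))] at h6
  exact add_right_cancel h6

/-- `C² Y = -Y - ωB Y` on horizontal fields. -/
lemma CC_id (hherm : D.IsHermitian R) {Y : VFM} (hY : D.Vp Y = 0) :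
    D.Hp (R (D.Hp (R Y))) = -Y - D.Hp (R (D.Vp (R Y))) := by
  have h1 : R (D.Vp (R Y)) + R (D.Hp (R Y)) = -Y := by
    rw [← hherm.1, D.Vp_add_Hp, hherm.2.2.1]
  have h2 : D.Hp (R (D.Vp (R Y))) + D.Hp (R (D.Hp (R Y))) = D.Hp (-Y) := by
    rw [← D.Hp_add, h1]
  have h3 : D.Hp (-Y) = -Y := by
    rw [addmap_neg D.Hp D.Hp_add, D.horiz_eq hY]
  rw [h3] at h2
  exact eq_sub_of_add_eq' h2

/-- `⟨ωB Y, Z⟩ = -⟨BY, BZ⟩` for `Z` horizontal. -/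
lemma omB_pair (hherm : D.IsHermitian R) {Z : VFM} (hZ : D.Vp Z = 0) (Y : VFM) :
    D.gM (D.Hp (R (D.Vp (R Y)))) Z = -(D.gM (D.Vp (R Y)) (D.Vp (R Z))) := by
  have h1 : D.gM (D.Hp (R (D.Vp (R Y)))) Z = D.gM (R (D.Vp (R Y))) Z := by
    conv_rhs => rw [← D.Vp_add_Hp (R (D.Vp (R Y)))]
    rw [D.gM_add_left, D.gM_Vp_horiz hZ, zero_add]
  rw [h1, D.skewR hherm, neg_inj]
  conv_lhs => rw [← D.Vp_add_Hp (R Z)]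
  rw [D.gM_add_right, D.gM_vert_Hp (D.Hp_Vp _), add_zero]

lemma omB_move (hherm : D.IsHermitian R) {Y X : VFM} (hY : D.Vp Y = 0) (hX : D.Vp X = 0) :
    D.gM Y (D.Hp (R (D.Vp (R X)))) = D.gM (D.Hp (R (D.Vp (R Y)))) X := by
  rw [D.gM_symm, D.omB_pair hherm hY X, D.omB_pair hherm hX Y,
    D.gM_symm (D.Vp (R X)) (D.Vp (R Y))]

/-- `⟨CY, Z⟩ = -⟨Y, CZ⟩` for `Y`, `Z` horizontal. -/
lemma Cskew (hherm : D.IsHermitian R) {Y Z : VFM} (hY : D.Vp Y = 0) (hZ : D.Vp Z = 0) :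
    D.gM (D.Hp (R Y)) Z = -(D.gM Y (D.Hp (R Z))) := by
  have h1 : D.gM (D.Hp (R Y)) Z = D.gM (R Y) Z := by
    conv_rhs => rw [← D.Vp_add_Hp (R Y)]
    rw [D.gM_add_left, D.gM_Vp_horiz hZ, zero_add]
  have h2 : D.gM Y (D.Hp (R Z)) = D.gM Y (R Z) := by
    conv_rhs => rw [← D.Vp_add_Hp (R Z)]
    rw [D.gM_add_right, D.gM_horiz_Vp hY, zero_add]
  rw [h1, h2]
  exact D.skewR hherm Y Z

/-- key identity: `ωB(H∇_W V) = (cos²θ − 1) • H∇_W V`. -/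
lemma omB_hnabla {m : ℕ} {e : Fin m → VFM} (he : D.IsFrame e)
    (hherm : D.IsHermitian R) (hparallel : D.IsParallel R)
    (hpar : D.OmParallel R) (hslant : D.IsSlantOp R θ)
    {V W : VFM} (hV : D.Hp V = 0) (hW : D.Hp W = 0) :
    D.Hp (R (D.Vp (R (D.Hp (D.nabla W V)))))
      = ((fun _ => Real.cos θ ^ 2 - 1) : M → ℝ) • D.Hp (D.nabla W V) := by
  have hstar1 : D.Hp (D.nabla W (D.Vp (R V))) = D.Hp (R (D.Hp (D.nabla W V))) :=
    D.star_id hherm hparallel hpar hW hV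
  have hstar2 : D.Hp (D.nabla W (D.Vp (R (D.Vp (R V)))))
      = D.Hp (R (D.Hp (D.nabla W (D.Vp (R V))))) :=
    D.star_id hherm hparallel hpar hW (D.Hp_Vp _)
  have hphi2 := D.phi_sq he hherm hslant hV
  rw [hphi2, hstar1] at hstar2
  have hlhs : D.Hp (D.nabla W (((fun _ => -(Real.cos θ ^ 2)) : M → ℝ) • V))
      = ((fun _ => -(Real.cos θ ^ 2)) : M → ℝ) • D.Hp (D.nabla W V) := by
    rw [D.nabla_leibniz, D.Hp_add, D.Hp_smul, D.Hp_smul, hV, smul_zero, zero_add]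
  rw [hlhs] at hstar2
  have hcc := D.CC_id hherm (Y := D.Hp (D.nabla W V)) (D.Vp_Hp _)
  rw [hcc] at hstar2
  have h10 := sub_eq_iff_eq_add.mp hstar2.symm
  have h11 := eq_sub_of_add_eq' h10.symm
  rw [h11, show ((fun _ => Real.cos θ ^ 2 - 1) : M → ℝ)
      = ((fun _ => Real.cos θ ^ 2) : M → ℝ) - 1 from rfl, sub_smul, one_smul,
    show ((fun _ => -(Real.cos θ ^ 2)) : M → ℝ) = -((fun _ => Real.cos θ ^ 2) : M → ℝ)
      from rfl, neg_smul]
  abel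

/-- main pointwise lemma: `⟨H∇_{φV} φW, X⟩ = -cos²θ ⟨H∇_V W, X⟩`. -/
lemma L1 {m : ℕ} {e : Fin m → VFM} (he : D.IsFrame e)
    (hherm : D.IsHermitian R) (hparallel : D.IsParallel R)
    (hpar : D.OmParallel R) (hslant : D.IsSlantOp R θ)
    {V W X : VFM} (hV : D.Hp V = 0) (hW : D.Hp W = 0) (hX : D.Vp X = 0) :
    D.gM (D.Hp (D.nabla (D.Vp (R V)) (D.Vp (R W)))) X
      = ((fun _ => -(Real.cos θ ^ 2)) : M → ℝ) * D.gM (D.Hp (D.nabla V W)) X := by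
  have s1 : D.Hp (D.nabla (D.Vp (R V)) (D.Vp (R W)))
      = D.Hp (R (D.Hp (D.nabla (D.Vp (R V)) W))) :=
    D.star_id hherm hparallel hpar (D.Hp_Vp _) hW
  have s2 : D.gM (D.Hp (R (D.Hp (D.nabla (D.Vp (R V)) W)))) X
      = -(D.gM (D.Hp (D.nabla (D.Vp (R V)) W)) (D.Hp (R X))) :=
    D.Cskew hherm (D.Vp_Hp _) hX
  have s3 : D.gM (D.Hp (D.nabla (D.Vp (R V)) W)) (D.Hp (R X))
      = D.gM (D.Hp (D.nabla W (D.Vp (R V)))) (D.Hp (R X)) :=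
    D.hp_nabla_pair (D.Hp_Vp _) hW (D.Vp_Hp _)
  have s4 : D.Hp (D.nabla W (D.Vp (R V))) = D.Hp (R (D.Hp (D.nabla W V))) :=
    D.star_id hherm hparallel hpar hW hV
  have s5 : D.gM (D.Hp (R (D.Hp (D.nabla W V)))) (D.Hp (R X))
      = -(D.gM (D.Hp (D.nabla W V)) (D.Hp (R (D.Hp (R X))))) :=
    D.Cskew hherm (D.Vp_Hp _) (D.Vp_Hp _)
  have s6 : D.Hp (R (D.Hp (R X))) = -X - D.Hp (R (D.Vp (R X))) := D.CC_id hherm hX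
  have s8 : D.gM (D.Hp (D.nabla W V)) (D.Hp (R (D.Vp (R X))))
      = D.gM (D.Hp (R (D.Vp (R (D.Hp (D.nabla W V)))))) X :=
    D.omB_move hherm (D.Vp_Hp _) hX
  have s9 := D.omB_hnabla he hherm hparallel hpar hslant hV hW
  have s11 : D.gM (D.Hp (D.nabla W V)) X = D.gM (D.Hp (D.nabla V W)) X :=
    D.hp_nabla_pair hW hV hX
  rw [s1, s2, s3, s4, s5, s6, neg_neg, D.gM_sub_right, D.gM_neg_right, s8, s9,
    D.gM_smul_left, s11]
  funext p
  simp only [Pi.add_apply, Pi.sub_apply, Pi.mul_apply, Pi.neg_apply]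
  ring

end Rlemmas

end HorizConfSubmersion

end Aux

/-- if `dim N = 2` and `ω_R` is parallel with slant angle
`0 ≤ θ_R < π/2` for some `R ∈ {I, J, K}`, then `F` is harmonic. -/
theorem harmonic_of_dimN_two
    {M VFM VFN : Type} [AddCommGroup VFM] [Module (M → ℝ) VFM]
    [AddCommGroup VFN] [Module (M → ℝ) VFN]
    (D : HorizConfSubmersion M VFM VFN) (Q : HyperkahlerTriple D)
    (θI θJ θK : ℝ)
    (hslantI : D.IsSlantOp Q.I θI) (hslantJ : D.IsSlantOp Q.J θJ)
    (hslantK : D.IsSlantOp Q.K θK)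
    (hdim : D.dimN = 2)
    (R : VFM → VFM) (θR : ℝ)
    (hR : (R = Q.I ∧ θR = θI) ∨ (R = Q.J ∧ θR = θJ) ∨ (R = Q.K ∧ θR = θK))
    (hpar : D.OmParallel R) (hθ : θR < Real.pi / 2) :
    D.Harmonic := by
  classical
  obtain ⟨hherm, hparallel, hslant⟩ :
      D.IsHermitian R ∧ D.IsParallel R ∧ D.IsSlantOp R θR := by
    rcases hR with ⟨h1, h2⟩ | ⟨h1, h2⟩ | ⟨h1, h2⟩
    · subst h1; subst h2; exact ⟨Q.hermitian_I, Q.parallel_I, hslantI⟩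
    · subst h1; subst h2; exact ⟨Q.hermitian_J, Q.parallel_J, hslantJ⟩
    · subst h1; subst h2; exact ⟨Q.hermitian_K, Q.parallel_K, hslantK⟩
  have hcos : 0 < Real.cos θR := by
    refine Real.cos_pos_of_mem_Ioo ⟨?_, hθ⟩
    have h0 := hslant.1
    have hpi := Real.pi_pos
    linarith
  intro m e he
  obtain ⟨f, hforth, hfcomp⟩ := D.frameN
  choose Xf hXfv hXfe using fun j => D.Fstar_surj (f j)
  suffices key : ∀ X, D.Vp X = 0 → D.gN (∑ i, D.sff (e i) (e i)) (D.Fstar X) = 0 by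
    rw [hfcomp (∑ i, D.sff (e i) (e i))]
    refine Finset.sum_eq_zero fun j _ => ?_
    rw [← hXfe j, key (Xf j) (hXfv j), zero_smul]
  intro X hX
  -- Claim A : the vertical trace vanishes (the slant argument)
  have traceA : ∀ p, ∑ i, D.gM (D.Hp (D.nabla (D.Vp (e i)) (D.Vp (e i)))) X p = 0 := by
    have hSAl_add : ∀ A A' B, D.gM (D.Hp (D.nabla (D.Vp (R (D.Vp (A + A')))) (D.Vp B))) X
        = D.gM (D.Hp (D.nabla (D.Vp (R (D.Vp A))) (D.Vp B))) X
          + D.gM (D.Hp (D.nabla (D.Vp (R (D.Vp A'))) (D.Vp B))) X := by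
      intro A A' B
      rw [D.Vp_add, hherm.1, D.Vp_add, D.nabla_add_left, D.Hp_add, D.gM_add_left]
    have hSAl_smul : ∀ (g : M → ℝ) A B,
        D.gM (D.Hp (D.nabla (D.Vp (R (D.Vp (g • A)))) (D.Vp B))) X
        = g * D.gM (D.Hp (D.nabla (D.Vp (R (D.Vp A))) (D.Vp B))) X := by
      intro g A B
      rw [D.Vp_smul, hherm.2.1, D.Vp_smul, D.nabla_smul_left, D.Hp_smul, D.gM_smul_left]
    have hSAr_add : ∀ A B B', D.gM (D.Hp (D.nabla (D.Vp (R (D.Vp A))) (D.Vp (B + B')))) X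
        = D.gM (D.Hp (D.nabla (D.Vp (R (D.Vp A))) (D.Vp B))) X
          + D.gM (D.Hp (D.nabla (D.Vp (R (D.Vp A))) (D.Vp B'))) X := by
      intro A B B'
      rw [D.Vp_add, D.nabla_add_right, D.Hp_add, D.gM_add_left]
    have hSAr_smul : ∀ (g : M → ℝ) A B,
        D.gM (D.Hp (D.nabla (D.Vp (R (D.Vp A))) (D.Vp (g • B)))) X
        = g * D.gM (D.Hp (D.nabla (D.Vp (R (D.Vp A))) (D.Vp B))) X := by
      intro g A B
      rw [D.Vp_smul, D.nabla_leibniz, D.Hp_add, D.Hp_smul, D.Hp_smul, D.Hp_Vp, smul_zero,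
        zero_add, D.gM_smul_left]
    have hadjA : ∀ A B, D.gM (D.Vp (R (D.Vp A))) B = D.gM A (-(D.Vp (R (D.Vp B)))) := by
      intro A B
      rw [D.gM_Vp_move, D.skewR hherm, D.gM_Vp_move, D.gM_neg_right]
    have htrans := D.transfer he
      (fun A B => D.gM (D.Hp (D.nabla (D.Vp (R (D.Vp A))) (D.Vp B))) X)
      hSAl_add hSAl_smul hSAr_add hSAr_smul
      (fun E => D.Vp (R (D.Vp E))) (fun E => -(D.Vp (R (D.Vp E)))) hadjA
    have hL : ∀ i, D.gM (D.Hp (D.nabla (D.Vp (R (D.Vp (e i)))) (D.Vp (D.Vp (R (D.Vp (e i))))))) X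
        = ((fun _ => -(Real.cos θR ^ 2)) : M → ℝ)
            * D.gM (D.Hp (D.nabla (D.Vp (e i)) (D.Vp (e i)))) X := by
      intro i
      rw [D.Vp_Vp]
      exact D.L1 he hherm hparallel hpar hslant (D.Hp_Vp (e i)) (D.Hp_Vp (e i)) hX
    have hRHS : ∀ j, D.gM (D.Hp (D.nabla (D.Vp (R (D.Vp (-(D.Vp (R (D.Vp (e j))))))))
          (D.Vp (e j)))) X
        = ((fun _ => Real.cos θR ^ 2) : M → ℝ)
            * D.gM (D.Hp (D.nabla (D.Vp (e j)) (D.Vp (e j)))) X := by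
      intro j
      rw [show (-(D.Vp (R (D.Vp (e j))))) = ((-1 : M → ℝ)) • (D.Vp (R (D.Vp (e j)))) from
          (neg_one_smul _ _).symm,
        D.Vp_smul, hherm.2.1, D.Vp_smul, D.nabla_smul_left, D.Hp_smul, D.gM_smul_left,
        D.Vp_Vp, D.phi_sq he hherm hslant (D.Hp_Vp (e j)),
        D.nabla_smul_left, D.Hp_smul, D.gM_smul_left]
      funext p
      simp only [Pi.mul_apply, Pi.neg_apply, Pi.one_apply]
      ring
    have hsum : ∑ i, ((fun _ => -(Real.cos θR ^ 2)) : M → ℝ)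
          * D.gM (D.Hp (D.nabla (D.Vp (e i)) (D.Vp (e i)))) X
        = ∑ j, ((fun _ => Real.cos θR ^ 2) : M → ℝ)
          * D.gM (D.Hp (D.nabla (D.Vp (e j)) (D.Vp (e j)))) X :=
      (Finset.sum_congr rfl fun i _ => (hL i).symm).trans
        (htrans.trans (Finset.sum_congr rfl fun j _ => hRHS j))
    intro p
    have hp := congrFun hsum p
    rw [Finset.sum_apply, Finset.sum_apply] at hp
    simp only [Pi.mul_apply] at hp
    rw [← Finset.mul_sum, ← Finset.mul_sum] at hp
    have hc2 : (0:ℝ) < Real.cos θR ^ 2 := pow_pos hcos 2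
    have h3 : Real.cos θR ^ 2 * (∑ i, D.gM (D.Hp (D.nabla (D.Vp (e i)) (D.Vp (e i)))) X p)
        = 0 := by linarith [hp]
    exact (mul_eq_zero.mp h3).resolve_left (ne_of_gt hc2)
  have claimA : ∀ p, ∑ i, D.gM (D.nabla (D.Vp (e i)) (D.Vp (e i))) X p = 0 := by
    intro p
    calc ∑ i, D.gM (D.nabla (D.Vp (e i)) (D.Vp (e i))) X p
        = ∑ i, D.gM (D.Hp (D.nabla (D.Vp (e i)) (D.Vp (e i)))) X p :=
          Finset.sum_congr rfl fun i _ => (congrFun (D.gM_Hp_drop hX _) p).symm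
      _ = 0 := traceA p
  -- Claim B : the mixed trace vanishes
  have claimB : ∀ p, ∑ i, D.gM (D.nabla (D.Hp (e i)) (D.Vp (e i))) X p = 0 := by
    have hSB1 : ∀ A A' B : VFM, D.gM (D.Vp (A + A')) (D.nabla B X)
        = D.gM (D.Vp A) (D.nabla B X) + D.gM (D.Vp A') (D.nabla B X) := by
      intro A A' B
      rw [D.Vp_add, D.gM_add_left]
    have hSB2 : ∀ (g : M → ℝ) (A B : VFM), D.gM (D.Vp (g • A)) (D.nabla B X)
        = g * D.gM (D.Vp A) (D.nabla B X) := by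
      intro g A B
      rw [D.Vp_smul, D.gM_smul_left]
    have hSB3 : ∀ A B B' : VFM, D.gM (D.Vp A) (D.nabla (B + B') X)
        = D.gM (D.Vp A) (D.nabla B X) + D.gM (D.Vp A) (D.nabla B' X) := by
      intro A B B'
      rw [D.nabla_add_left, D.gM_add_right]
    have hSB4 : ∀ (g : M → ℝ) (A B : VFM), D.gM (D.Vp A) (D.nabla (g • B) X)
        = g * D.gM (D.Vp A) (D.nabla B X) := by
      intro g A B
      rw [D.nabla_smul_left, D.gM_smul_right]
    have htrans := D.transfer he (fun A B => D.gM (D.Vp A) (D.nabla B X))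
      hSB1 hSB2 hSB3 hSB4
      D.Hp D.Hp (fun A B => D.gM_Hp_move A B)
    have hzero : ∑ j, D.gM (D.Vp (D.Hp (e j))) (D.nabla (e j) X) = 0 :=
      Finset.sum_eq_zero fun j _ => by rw [D.Vp_Hp, D.gM_zero_left]
    have hfun : ∑ i, D.gM (D.Vp (e i)) (D.nabla (D.Hp (e i)) X) = 0 := htrans.trans hzero
    intro p
    have hp' : ∑ i, D.gM (D.Vp (e i)) (D.nabla (D.Hp (e i)) X) p = 0 := by
      have h := congrFun hfun p
      rw [Finset.sum_apply] at h
      simpa using h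
    have hB1 : ∀ i, D.gM (D.nabla (D.Hp (e i)) (D.Vp (e i))) X
        = -(D.gM (D.Vp (e i)) (D.nabla (D.Hp (e i)) X)) := by
      intro i
      have hm := D.nabla_metric (D.Hp (e i)) (D.Vp (e i)) X
      rw [D.gM_Vp_horiz hX, D.act_zero] at hm
      exact eq_neg_of_add_eq_zero_left hm.symm
    calc ∑ i, D.gM (D.nabla (D.Hp (e i)) (D.Vp (e i))) X p
        = ∑ i, -(D.gM (D.Vp (e i)) (D.nabla (D.Hp (e i)) X) p) :=
          Finset.sum_congr rfl fun i _ => by rw [hB1 i]; rfl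
      _ = -(∑ i, D.gM (D.Vp (e i)) (D.nabla (D.Hp (e i)) X) p) := by
          rw [Finset.sum_neg_distrib]
      _ = 0 := by rw [hp', neg_zero]
  -- Claim C : the gradient trace
  have claimC : ∀ p, ∑ i, D.act (D.Hp (e i)) (fun q => Real.log (D.lam q)) p
        * D.gM (D.Hp (e i)) X p
      = D.act X (fun q => Real.log (D.lam q)) p := by
    intro p
    have h1 : ∀ i, D.act (D.Hp (e i)) (fun q => Real.log (D.lam q))
        = D.gM (D.Hp (D.grad (fun q => Real.log (D.lam q)))) (e i) := by
      intro i
      rw [← D.grad_spec, ← D.gM_Hp_move]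
    have h2 : ∀ i, D.gM (D.Hp (e i)) X = D.gM (e i) X := fun i => D.gM_Hp_drop hX _
    have h3 := congrFun (D.gM_expand he (D.Hp (D.grad (fun q => Real.log (D.lam q)))) X) p
    rw [Finset.sum_apply] at h3
    simp only [Pi.mul_apply] at h3
    have h4 : D.gM (D.Hp (D.grad (fun q => Real.log (D.lam q)))) X
        = D.act X (fun q => Real.log (D.lam q)) := by
      rw [D.gM_Hp_drop hX, D.grad_spec]
    calc ∑ i, D.act (D.Hp (e i)) (fun q => Real.log (D.lam q)) p * D.gM (D.Hp (e i)) X p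
        = ∑ i, D.gM X (e i) p * D.gM (D.Hp (D.grad (fun q => Real.log (D.lam q)))) (e i) p := by
          refine Finset.sum_congr rfl fun i _ => ?_
          rw [h1 i, h2 i, congrFun (D.gM_symm (e i) X) p]
          ring
      _ = D.gM (D.Hp (D.grad (fun q => Real.log (D.lam q)))) X p := h3.symm
      _ = D.act X (fun q => Real.log (D.lam q)) p := congrFun h4 p
  -- Claim D : the horizontal dimension is 2
  have claimD : ∀ p, ∑ i, D.gM (D.Hp (e i)) (D.Hp (e i)) p = 2 := by
    intro p
    have hlam2 : D.lam p ^ 2 ≠ 0 := pow_ne_zero _ (ne_of_gt (D.lam_pos p))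
    have hd : ∀ j, D.lam p ^ 2 * D.gM (Xf j) (Xf j) p = 1 := by
      intro j
      have h1 := D.conformal (Xf j) (Xf j) (hXfv j) (hXfv j)
      rw [hXfe j, hforth j j] at h1
      have h2 := congrFun h1.symm p
      simpa using h2
    have s1 : ∀ i : Fin m, D.lam p ^ 2 * D.gM (D.Hp (e i)) (D.Hp (e i)) p
        = D.gN (D.Fstar (D.Hp (e i))) (D.Fstar (D.Hp (e i))) p := by
      intro i
      rw [D.conformal _ _ (D.Vp_Hp _) (D.Vp_Hp _)]
    have s2 : ∀ i : Fin m, D.gN (D.Fstar (D.Hp (e i))) (D.Fstar (D.Hp (e i))) p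
        = ∑ j, (D.lam p ^ 2 * D.gM (e i) (Xf j) p) * (D.lam p ^ 2 * D.gM (e i) (Xf j) p) := by
      intro i
      have hcj : ∀ j, D.gN (D.Fstar (D.Hp (e i))) (f j)
          = fun q => D.lam q ^ 2 * D.gM (e i) (Xf j) q := by
        intro j
        rw [← hXfe j, D.conformal _ _ (D.Vp_Hp _) (hXfv j), D.gM_Hp_drop (hXfv j)]
      have hss : D.gN (D.Fstar (D.Hp (e i))) (D.Fstar (D.Hp (e i)))
          = ∑ j, D.gN (D.Fstar (D.Hp (e i))) (f j) * D.gN (D.Fstar (D.Hp (e i))) (f j) := by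
        nth_rewrite 2 [hfcomp (D.Fstar (D.Hp (e i)))]
        rw [D.gN_sum_right]
        exact Finset.sum_congr rfl fun j _ => D.gN_smul_right _ _ _
      have hp2 := congrFun hss p
      rw [Finset.sum_apply] at hp2
      rw [hp2]
      refine Finset.sum_congr rfl fun j _ => ?_
      simp only [Pi.mul_apply, hcj]
    have s3 : ∀ j, ∑ i, D.gM (e i) (Xf j) p * D.gM (e i) (Xf j) p
        = D.gM (Xf j) (Xf j) p := by
      intro j
      have h1 := congrFun (D.gM_expand he (Xf j) (Xf j)) p
      rw [Finset.sum_apply] at h1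
      simp only [Pi.mul_apply] at h1
      calc ∑ i, D.gM (e i) (Xf j) p * D.gM (e i) (Xf j) p
          = ∑ i, D.gM (Xf j) (e i) p * D.gM (Xf j) (e i) p :=
            Finset.sum_congr rfl fun i _ => by
              rw [congrFun (D.gM_symm (e i) (Xf j)) p]
        _ = D.gM (Xf j) (Xf j) p := h1.symm
    have hbig : D.lam p ^ 2 * (∑ i, D.gM (D.Hp (e i)) (D.Hp (e i)) p)
        = D.lam p ^ 2 * 2 := by
      calc D.lam p ^ 2 * (∑ i, D.gM (D.Hp (e i)) (D.Hp (e i)) p)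
          = ∑ i, D.lam p ^ 2 * D.gM (D.Hp (e i)) (D.Hp (e i)) p := Finset.mul_sum _ _ _
        _ = ∑ i, ∑ j, (D.lam p ^ 2 * D.gM (e i) (Xf j) p)
              * (D.lam p ^ 2 * D.gM (e i) (Xf j) p) :=
            Finset.sum_congr rfl fun i _ => (s1 i).trans (s2 i)
        _ = ∑ j, ∑ i, (D.lam p ^ 2 * D.gM (e i) (Xf j) p)
              * (D.lam p ^ 2 * D.gM (e i) (Xf j) p) := Finset.sum_comm
        _ = ∑ j, D.lam p ^ 2 * (D.lam p ^ 2
              * (∑ i, D.gM (e i) (Xf j) p * D.gM (e i) (Xf j) p)) := by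
            refine Finset.sum_congr rfl fun j _ => ?_
            rw [Finset.mul_sum, Finset.mul_sum]
            exact Finset.sum_congr rfl fun i _ => by ring
        _ = ∑ j, D.lam p ^ 2 * (D.lam p ^ 2 * D.gM (Xf j) (Xf j) p) :=
            Finset.sum_congr rfl fun j _ => by rw [s3 j]
        _ = ∑ j : Fin D.dimN, D.lam p ^ 2 * 1 :=
            Finset.sum_congr rfl fun j _ => by rw [hd j]
        _ = D.lam p ^ 2 * 2 := by
            rw [Finset.sum_const, Finset.card_univ, Fintype.card_fin, hdim, mul_one,
              two_smul]
            ring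
    exact mul_left_cancel₀ hlam2 hbig
  -- termwise expansion of the pairing
  have hterm : ∀ i, D.gN (D.sff (e i) (e i)) (D.Fstar X) = fun p =>
      D.lam p ^ 2 * (-(D.gM (D.nabla (D.Vp (e i)) (D.Vp (e i))) X p)
        - 2 * D.gM (D.nabla (D.Hp (e i)) (D.Vp (e i))) X p
        + 2 * (D.act (D.Hp (e i)) (fun q => Real.log (D.lam q)) p * D.gM (D.Hp (e i)) X p)
        - D.gM (D.Hp (e i)) (D.Hp (e i)) p * D.act X (fun q => Real.log (D.lam q)) p) := by
    intro i
    have hVi : D.Hp (D.Vp (e i)) = 0 := D.Hp_Vp _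
    have hHi : D.Vp (D.Hp (e i)) = 0 := D.Vp_Hp _
    have hsplit : D.sff (e i) (e i)
        = D.sff (D.Vp (e i)) (D.Vp (e i)) + D.sff (D.Vp (e i)) (D.Hp (e i))
          + (D.sff (D.Hp (e i)) (D.Vp (e i)) + D.sff (D.Hp (e i)) (D.Hp (e i))) := by
      conv_lhs => rw [← D.Vp_add_Hp (e i)]
      rw [D.sff_add_left, D.sff_add_right, D.sff_add_right]
    have p1 : D.gN (D.sff (D.Vp (e i)) (D.Vp (e i))) (D.Fstar X)
        = fun p => -(D.lam p ^ 2 * D.gM (D.nabla (D.Vp (e i)) (D.Vp (e i))) X p) := by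
      rw [D.sff_vert_right hVi, D.gN_neg_left, D.pair_Fstar hX]
      rfl
    have p2 : D.gN (D.sff (D.Vp (e i)) (D.Hp (e i))) (D.Fstar X)
        = fun p => -(D.lam p ^ 2 * D.gM (D.nabla (D.Hp (e i)) (D.Vp (e i))) X p) := by
      rw [D.sff_comm, D.sff_vert_right hVi, D.gN_neg_left, D.pair_Fstar hX]
      rfl
    have p3 : D.gN (D.sff (D.Hp (e i)) (D.Vp (e i))) (D.Fstar X)
        = fun p => -(D.lam p ^ 2 * D.gM (D.nabla (D.Hp (e i)) (D.Vp (e i))) X p) := by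
      rw [D.sff_vert_right hVi, D.gN_neg_left, D.pair_Fstar hX]
      rfl
    have hsf : D.sff (D.Hp (e i)) (D.Hp (e i))
        = D.act (D.Hp (e i)) (fun p => Real.log (D.lam p)) • D.Fstar (D.Hp (e i))
          + D.act (D.Hp (e i)) (fun p => Real.log (D.lam p)) • D.Fstar (D.Hp (e i))
          - D.gM (D.Hp (e i)) (D.Hp (e i)) • D.Fstar (D.grad fun p => Real.log (D.lam p)) :=
      D.sff_horizontal _ _ hHi hHi
    have p4 : D.gN (D.sff (D.Hp (e i)) (D.Hp (e i))) (D.Fstar X)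
        = fun p => D.act (D.Hp (e i)) (fun q => Real.log (D.lam q)) p
              * (D.lam p ^ 2 * D.gM (D.Hp (e i)) X p)
            + D.act (D.Hp (e i)) (fun q => Real.log (D.lam q)) p
              * (D.lam p ^ 2 * D.gM (D.Hp (e i)) X p)
            - D.gM (D.Hp (e i)) (D.Hp (e i)) p
              * (D.lam p ^ 2 * D.act X (fun q => Real.log (D.lam q)) p) := by
      rw [hsf, D.gN_sub_left, D.gN_add_left, D.gN_smul_left, D.gN_smul_left,
        D.conformal _ X hHi hX, D.pair_Fstar hX, D.grad_spec]
      funext p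
      simp only [Pi.add_apply, Pi.sub_apply, Pi.mul_apply]
    funext p
    rw [hsplit, D.gN_add_left, D.gN_add_left, D.gN_add_left]
    simp only [Pi.add_apply]
    rw [congrFun p1 p, congrFun p2 p, congrFun p3 p, congrFun p4 p]
    ring
  -- assemble
  rw [D.gN_sum_left]
  funext p
  rw [Finset.sum_apply]
  have hsum : ∑ i, D.gN (D.sff (e i) (e i)) (D.Fstar X) p
      = ∑ i, D.lam p ^ 2 * (-(D.gM (D.nabla (D.Vp (e i)) (D.Vp (e i))) X p)
          - 2 * D.gM (D.nabla (D.Hp (e i)) (D.Vp (e i))) X p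
          + 2 * (D.act (D.Hp (e i)) (fun q => Real.log (D.lam q)) p
              * D.gM (D.Hp (e i)) X p)
          - D.gM (D.Hp (e i)) (D.Hp (e i)) p
              * D.act X (fun q => Real.log (D.lam q)) p) :=
    Finset.sum_congr rfl fun i _ => by rw [hterm i]
  rw [hsum, ← Finset.mul_sum]
  have hfinal : ∑ i, (-(D.gM (D.nabla (D.Vp (e i)) (D.Vp (e i))) X p)
      - 2 * D.gM (D.nabla (D.Hp (e i)) (D.Vp (e i))) X p
      + 2 * (D.act (D.Hp (e i)) (fun q => Real.log (D.lam q)) p * D.gM (D.Hp (e i)) X p)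
      - D.gM (D.Hp (e i)) (D.Hp (e i)) p * D.act X (fun q => Real.log (D.lam q)) p) = 0 := by
    rw [Finset.sum_sub_distrib, Finset.sum_add_distrib, Finset.sum_sub_distrib,
      Finset.sum_neg_distrib, ← Finset.mul_sum, ← Finset.mul_sum, ← Finset.sum_mul,
      claimA p, claimB p, claimC p, claimD p]
    ring
  rw [hfinal, mul_zero]
  rfl
end
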